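/- For n ≥ 2, the nonlinearity of the majority function in 2n variables satisfies 2·N(M_{2n}) = 2^(2n) − C(2n,n), i.e., N(M_{2n}) = 2^(2n−1) − C(2n,n)/2, where C(2n,n) is the central binomial coefficient. -/

import Mathlib

set_option linter.unreachableTactic false
set_option linter.unusedTactic false


open Finset

/-- Hamming weight of a vector in `V_N = (Fin N → ZMod 2)`. -/
def wtV {N : ℕ} (x : Fin N → ZMod 2) : ℕ :=
  (Finset.univ.filter (fun i => x i = 1)).card

/-- Hamming weight of a Boolean function `f : V_N → GF(2)`. -/
def wtF {N : ℕ} (f : (Fin N → ZMod 2) → ZMod 2) : ℕ :=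
  (Finset.univ.filter (fun x => f x = 1)).card

/-- `a` is affine: `a x = w · x + b` for some `w ∈ V_N`, `b ∈ GF(2)`. -/
def IsAffine {N : ℕ} (a : (Fin N → ZMod 2) → ZMod 2) : Prop :=
  ∃ w : Fin N → ZMod 2, ∃ b : ZMod 2, ∀ x, a x = (∑ i, w i * x i) + b

/-- Hamming distance `d(f,g) = wt(f + g)`. -/
def hdist {N : ℕ} (f g : (Fin N → ZMod 2) → ZMod 2) : ℕ :=
  wtF (fun x => f x + g x)

/-- Nonlinearity: minimum distance to affine functions. -/
noncomputable def nlin {N : ℕ} (f : (Fin N → ZMod 2) → ZMod 2) : ℕ :=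
  sInf {d : ℕ | ∃ a, IsAffine a ∧ d = hdist f a}

/-- Threshold (majority-type) function: `maj N t x = 1` iff `wt(x) ≥ t`.
So `M_{2n+1} = maj (2n+1) (n+1)` and `M_{2n} = maj (2n) n`. -/
def maj (N t : ℕ) (x : Fin N → ZMod 2) : ZMod 2 :=
  if t ≤ wtV x then 1 else 0


lemma zmod2_cases (a : ZMod 2) : a = 0 ∨ a = 1 := by revert a; decide

def chi (c : ZMod 2) : ℤ := if c = 1 then -1 else 1

lemma chi_add (a b : ZMod 2) : chi (a + b) = chi a * chi b := by
  revert a b; decide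

lemma chi_abs (a : ZMod 2) : |chi a| = 1 := by revert a; decide

lemma card_univ_V (N : ℕ) : (Finset.univ : Finset (Fin N → ZMod 2)).card = 2 ^ N := by
  simp [Finset.card_univ]

def suppV {N : ℕ} (x : Fin N → ZMod 2) : Finset (Fin N) :=
  Finset.univ.filter (fun i => x i = 1)

lemma wtV_def {N : ℕ} (x : Fin N → ZMod 2) : wtV x = (suppV x).card := rfl

lemma suppV_inj {N : ℕ} (x y : Fin N → ZMod 2) (h : suppV x = suppV y) : x = y := by
  funext i
  have hx : i ∈ suppV x ↔ x i = 1 := by simp [suppV]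
  have hy : i ∈ suppV y ↔ y i = 1 := by simp [suppV]
  have key : (x i = 1) ↔ (y i = 1) := by rw [← hx, h, hy]
  rcases zmod2_cases (x i) with h1 | h1 <;> rcases zmod2_cases (y i) with h2 | h2
  · rw [h1, h2]
  · have := key.mpr h2; rw [h1] at this; exact absurd this (by decide)
  · have := key.mp h1; rw [h2] at this; exact absurd this (by decide)
  · rw [h1, h2]

lemma suppV_ite {N : ℕ} (s : Finset (Fin N)) :
    suppV (fun i => if i ∈ s then (1 : ZMod 2) else 0) = s := by
  ext i
  simp only [suppV, Finset.mem_filter, Finset.mem_univ, true_and]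
  by_cases hi : i ∈ s <;> simp [hi]

lemma card_wt_eq (N k : ℕ) :
    ((Finset.univ : Finset (Fin N → ZMod 2)).filter (fun x => wtV x = k)).card
      = N.choose k := by
  have h := Finset.card_powersetCard k (Finset.univ : Finset (Fin N))
  rw [Finset.card_univ, Fintype.card_fin] at h
  rw [← h]
  apply Finset.card_nbij (i := suppV)
  · intro x hx
    simp only [Finset.mem_coe, Finset.mem_filter] at hx
    simp [Finset.mem_powersetCard, ← wtV_def, hx.2]
  · intro x hx y hy hxy
    exact suppV_inj x y hxy
  · intro s hs
    simp only [Finset.mem_coe, Finset.mem_powersetCard] at hs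
    refine ⟨fun i => if i ∈ s then 1 else 0, ?_, suppV_ite s⟩
    rw [Finset.mem_coe, Finset.mem_filter]
    simp [Finset.mem_coe, Finset.mem_filter, wtV_def, suppV_ite, hs.2]

lemma wtV_le {N : ℕ} (x : Fin N → ZMod 2) : wtV x ≤ N := by
  have := Finset.card_filter_le (Finset.univ : Finset (Fin N)) (fun i => x i = 1)
  simpa [wtV] using this

lemma wtV_compl {N : ℕ} (x : Fin N → ZMod 2) :
    wtV (fun i => x i + 1) = N - wtV x := by
  have hsupp : suppV (fun i => x i + 1) = (suppV x)ᶜ := by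
    ext i
    simp only [suppV, Finset.mem_filter, Finset.mem_univ, true_and, Finset.mem_compl]
    rcases zmod2_cases (x i) with h | h <;> simp [h] <;> decide
  rw [wtV_def, hsupp, Finset.card_compl, ← wtV_def, Fintype.card_fin]

lemma flip_flipV {N : ℕ} (x : Fin N → ZMod 2) : (fun i => (fun j => x j + 1) i + 1) = x := by
  funext i
  show x i + 1 + 1 = x i
  rcases zmod2_cases (x i) with h | h <;> rw [h] <;> decide

lemma card_ge_eq_card_le (n : ℕ) :
    ((Finset.univ : Finset (Fin (2*n) → ZMod 2)).filter (fun x => n ≤ wtV x)).card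
      = ((Finset.univ : Finset (Fin (2*n) → ZMod 2)).filter (fun x => wtV x ≤ n)).card := by
  apply Finset.card_nbij' (i := fun x => fun i => x i + 1) (j := fun x => fun i => x i + 1)
  · intro x hx
    simp only [Finset.mem_coe, Finset.mem_filter, Finset.mem_univ, true_and] at *
    rw [wtV_compl]; omega
  · intro x hx
    simp only [Finset.mem_coe, Finset.mem_filter, Finset.mem_univ, true_and] at *
    have := wtV_le x
    rw [wtV_compl]; omega
  · intro x _; exact flip_flipV x
  · intro x _; exact flip_flipV x

lemma count_lt (n : ℕ) :
    2 * ((Finset.univ : Finset (Fin (2*n) → ZMod 2)).filter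
        (fun x => ¬ n ≤ wtV x)).card + (2*n).choose n = 2 ^ (2*n) := by
  classical
  set Z := ((Finset.univ : Finset (Fin (2*n) → ZMod 2)).filter (fun x => ¬ n ≤ wtV x)).card
  set O := ((Finset.univ : Finset (Fin (2*n) → ZMod 2)).filter (fun x => n ≤ wtV x)).card
  have htot : O + Z = 2 ^ (2*n) := by
    rw [← card_univ_V (2*n)]
    exact (Finset.card_filter_add_card_filter_not (fun x => n ≤ wtV x)).symm ▸ rfl
  have hsplit : ((Finset.univ : Finset (Fin (2*n) → ZMod 2)).filter (fun x => wtV x ≤ n)).card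
      = Z + (2*n).choose n := by
    rw [← card_wt_eq (2*n) n]
    rw [← Finset.card_union_of_disjoint (by
      simp only [Finset.disjoint_filter]
      intro x _ h h2
      omega)]
    congr 1
    ext x
    simp only [Finset.mem_union, Finset.mem_filter, Finset.mem_univ, true_and]
    omega
  have := card_ge_eq_card_le n
  omega

lemma wtF_le {N : ℕ} (g : (Fin N → ZMod 2) → ZMod 2) : wtF g ≤ 2 ^ N := by
  rw [← card_univ_V N]; exact Finset.card_filter_le _ _

lemma sum_chi {N : ℕ} (g : (Fin N → ZMod 2) → ZMod 2) :
    ∑ x : Fin N → ZMod 2, chi (g x) = 2 ^ N - 2 * (wtF g : ℤ) := by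
  classical
  rw [← Finset.sum_filter_add_sum_filter_not Finset.univ (fun x => g x = 1)]
  have e1 : ∀ x ∈ Finset.univ.filter (fun x => g x = 1), chi (g x) = -1 := by
    intro x hx; simp only [Finset.mem_filter] at hx; simp [chi, hx.2]
  have e2 : ∀ x ∈ Finset.univ.filter (fun x => ¬ g x = 1), chi (g x) = 1 := by
    intro x hx; simp only [Finset.mem_filter] at hx; simp [chi, hx.2]
  rw [Finset.sum_congr rfl e1, Finset.sum_congr rfl e2, Finset.sum_const, Finset.sum_const]
  have hcard : (Finset.univ.filter (fun x : Fin N → ZMod 2 => ¬ g x = 1)).card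
      = 2 ^ N - wtF g := by
    have := Finset.card_filter_add_card_filter_not
      (s := (Finset.univ : Finset (Fin N → ZMod 2))) (fun x => g x = 1)
    rw [card_univ_V] at this
    unfold wtF; omega
  rw [hcard]
  have hle := wtF_le g
  show (wtF g : ℤ) • (-1 : ℤ) + ((2 ^ N - wtF g : ℕ) : ℤ) • (1 : ℤ)
      = 2 ^ N - 2 * (wtF g : ℤ)
  rw [Nat.cast_sub hle]
  simp only [smul_eq_mul]
  push_cast
  ring

lemma wtF_maj (n : ℕ) :
    wtF (maj (2*n) n)
      = ((Finset.univ : Finset (Fin (2*n) → ZMod 2)).filter (fun x => n ≤ wtV x)).card := by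
  unfold wtF
  congr 1
  ext x
  rw [Finset.mem_filter, Finset.mem_filter]; simp only [Finset.mem_univ, true_and, maj]
  split <;> simp_all

lemma choose_double (n : ℕ) (hn : 1 ≤ n) :
    2 * (2*n - 1).choose (n - 1) = (2*n).choose n := by
  obtain ⟨m, rfl⟩ : ∃ m, n = m + 1 := ⟨n - 1, by omega⟩
  have h1 : 2 * (m + 1) - 1 = 2 * m + 1 := by omega
  have h2 : m + 1 - 1 = m := by omega
  rw [h1, h2]
  have h3 : 2 * (m + 1) = (2 * m + 1) + 1 := by omega
  rw [h3, Nat.choose_succ_succ (2 * m + 1) m]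
  have h4 : (2 * m + 1).choose (m + 1) = (2 * m + 1).choose m := by
    have := Nat.choose_symm (n := 2 * m + 1) (k := m) (by omega)
    have h5 : 2 * m + 1 - m = m + 1 := by omega
    rw [h5] at this
    exact this
  simp only [Nat.succ_eq_add_one]
  omega

lemma walsh_bound (n : ℕ) (hn : 2 ≤ n) (w : Fin (2*n) → ZMod 2) :
    |∑ x : Fin (2*n) → ZMod 2, chi (maj (2*n) n x) * chi (∑ i, w i * x i)|
      ≤ ((2*n).choose n : ℤ) := by
  classical
  by_cases hw : w = 0
  · subst hw
    have hz : ∀ x : Fin (2*n) → ZMod 2, chi ((0:ZMod 2)) = chi (∑ i, (0 : Fin (2*n) → ZMod 2) i * x i) := by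
      intro x; congr 1; simp
    have : ∑ x : Fin (2*n) → ZMod 2, chi (maj (2*n) n x) * chi (∑ i, (0 : Fin (2*n) → ZMod 2) i * x i)
        = ∑ x : Fin (2*n) → ZMod 2, chi (maj (2*n) n x) := by
      apply Finset.sum_congr rfl
      intro x _
      rw [← hz x]
      simp [chi]
    rw [this, sum_chi]
    have htot : wtF (maj (2*n) n)
        + ((Finset.univ : Finset (Fin (2*n) → ZMod 2)).filter (fun x => ¬ n ≤ wtV x)).card
        = 2 ^ (2*n) := by
      rw [wtF_maj n, ← card_univ_V (2*n)]
      exact Finset.card_filter_add_card_filter_not _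
    have hcount := count_lt n
    have hO : 2 * wtF (maj (2*n) n) = 2 ^ (2*n) + (2*n).choose n := by
      clear * - htot hcount
      omega
    have hcast : (2:ℤ) ^ (2*n) - 2 * (wtF (maj (2*n) n) : ℤ) = -(((2*n).choose n : ℕ) : ℤ) := by
      have h := congrArg (fun t : ℕ => (t:ℤ)) hO
      push_cast at h
      linarith
    rw [hcast, abs_neg, Nat.abs_cast]
  · -- w ≠ 0 : flip involution argument
    obtain ⟨i₀, hi₀⟩ : ∃ i, w i = 1 := by
      by_contra hc
      push_neg at hc
      apply hw
      funext i
      rcases zmod2_cases (w i) with h | h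
      · exact h
      · exact absurd h (hc i)
    set flip : (Fin (2*n) → ZMod 2) → (Fin (2*n) → ZMod 2) :=
      fun x => Function.update x i₀ (x i₀ + 1) with hflip
    have flip_invol : ∀ x, flip (flip x) = x := by
      intro x
      simp only [hflip, Function.update_self, Function.update_idem]
      have : x i₀ + 1 + 1 = x i₀ := by
        rcases zmod2_cases (x i₀) with h | h <;> rw [h] <;> decide
      rw [this, Function.update_eq_self]
    have dot_flip : ∀ x, (∑ i, w i * flip x i) = (∑ i, w i * x i) + 1 := by
      intro x
      have hfun : (fun i => w i * flip x i)
          = Function.update (fun i => w i * x i) i₀ (w i₀ * (x i₀ + 1)) := by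
        funext i
        by_cases h : i = i₀
        · subst h; simp [hflip, Function.update_self]
        · simp [hflip, Function.update_of_ne h]
      rw [hfun, Finset.sum_update_of_mem (Finset.mem_univ i₀), ← Finset.erase_eq,
        ← Finset.add_sum_erase Finset.univ (fun i => w i * x i) (Finset.mem_univ i₀), hi₀]
      ring
    have flip_i₀ : ∀ x, flip x i₀ = x i₀ + 1 := by
      intro x; simp [hflip, Function.update_self]
    have wt_flip : ∀ x : Fin (2*n) → ZMod 2, x i₀ = 0 → wtV (flip x) = wtV x + 1 := by
      intro x hx
      have hsupp : suppV (flip x) = insert i₀ (suppV x) := by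
        ext i
        simp only [suppV, Finset.mem_filter, Finset.mem_univ, true_and, Finset.mem_insert]
        by_cases h : i = i₀
        · subst h; simp [flip_i₀, hx]
        · simp [hflip, Function.update_of_ne h, h]
      have hnot : i₀ ∉ suppV x := by
        simp [suppV, hx]
      rw [wtV_def, hsupp, Finset.card_insert_of_notMem hnot, ← wtV_def]
    -- split the sum over x i₀ = 0 and its flip
    set F : (Fin (2*n) → ZMod 2) → ℤ :=
      fun x => chi (maj (2*n) n x) * chi (∑ i, w i * x i) with hF
    set B := (Finset.univ : Finset (Fin (2*n) → ZMod 2)).filter (fun x => x i₀ = 0) with hB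
    have hsplit : ∑ x : Fin (2*n) → ZMod 2, F x = ∑ x ∈ B, (F x + F (flip x)) := by
      rw [Finset.sum_add_distrib]
      rw [← Finset.sum_filter_add_sum_filter_not Finset.univ
        (fun x : Fin (2*n) → ZMod 2 => x i₀ = 0) F, hB]
      congr 1
      apply Finset.sum_nbij' (i := flip) (j := flip)
      · intro x hx
        simp only [Finset.mem_filter, Finset.mem_univ, true_and] at *
        rw [flip_i₀]
        rcases zmod2_cases (x i₀) with h | h
        · exact absurd h hx
        · rw [h]; decide
      · intro x hx
        simp only [Finset.mem_filter, Finset.mem_univ, true_and] at *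
        rw [flip_i₀, hx]
        decide
      · intro x _; exact flip_invol x
      · intro x _; exact flip_invol x
      · intro x _; rw [flip_invol]
    have hterm : ∀ x ∈ B, F x + F (flip x)
        = if wtV x = n - 1 then 2 * chi (∑ i, w i * x i) else 0 := by
      intro x hx
      rw [hB] at hx
      simp only [Finset.mem_filter, Finset.mem_univ, true_and] at hx
      have hwt := wt_flip x hx
      have hdot := dot_flip x
      have hchi1 : chi 1 = -1 := by decide
      simp only [hF]
      rw [hdot, chi_add, hchi1]
      by_cases hcase : wtV x = n - 1
      · rw [if_pos hcase]
        have h1 : maj (2*n) n x = 0 := by unfold maj; rw [if_neg (by omega)]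
        have h2 : maj (2*n) n (flip x) = 1 := by unfold maj; rw [hwt, if_pos (by omega)]
        rw [h1, h2]
        have hc0 : chi 0 = 1 := by decide
        rw [hc0, hchi1]
        ring
      · rw [if_neg hcase]
        have heq : maj (2*n) n (flip x) = maj (2*n) n x := by
          unfold maj
          rw [hwt]
          by_cases hle : n ≤ wtV x
          · rw [if_pos hle, if_pos (by omega)]
          · rw [if_neg hle, if_neg (by omega)]
        rw [heq]
        ring
    rw [hsplit, Finset.sum_congr rfl hterm, ← Finset.sum_filter]
    set A := B.filter (fun x => wtV x = n - 1) with hA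
    have habs : |∑ x ∈ A, 2 * chi (∑ i, w i * x i)| ≤ 2 * (A.card : ℤ) := by
      refine (Finset.abs_sum_le_sum_abs _ _).trans ?_
      have : ∀ x ∈ A, |2 * chi (∑ i, w i * x i)| = 2 := by
        intro x _
        rw [abs_mul, chi_abs]
        decide
      rw [Finset.sum_congr rfl this, Finset.sum_const]
      simp [mul_comm]
    have hcard : A.card ≤ (2*n - 1).choose (n - 1) := by
      have hpc := Finset.card_powersetCard (n - 1) ((Finset.univ : Finset (Fin (2*n))).erase i₀)
      rw [Finset.card_erase_of_mem (Finset.mem_univ i₀), Finset.card_univ, Fintype.card_fin] at hpc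
      rw [← hpc]
      apply Finset.card_le_card_of_injOn suppV
      · intro x hx
        rw [hA, hB] at hx
        simp only [Finset.mem_coe, Finset.mem_filter, Finset.mem_univ, true_and] at hx
        rw [Finset.mem_coe, Finset.mem_powersetCard]
        constructor
        · intro i hi
          simp only [suppV, Finset.mem_filter, Finset.mem_univ, true_and] at hi
          refine Finset.mem_erase.mpr ⟨?_, Finset.mem_univ i⟩
          intro hii
          rw [hii, hx.1] at hi
          exact absurd hi (by decide)
        · rw [← wtV_def]; exact hx.2
      · intro x _ y _ hxy
        exact suppV_inj x y hxy
    have hfin : 2 * ((2*n - 1).choose (n - 1)) = (2*n).choose n := choose_double n (le_trans one_le_two hn)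
    calc |∑ x ∈ A, 2 * chi (∑ i, w i * x i)| ≤ 2 * (A.card : ℤ) := habs
      _ ≤ 2 * ((2*n - 1).choose (n - 1) : ℤ) := by
          have : (A.card : ℤ) ≤ ((2*n - 1).choose (n - 1) : ℤ) := by exact_mod_cast hcard
          linarith
      _ = ((2*n).choose n : ℤ) := by exact_mod_cast congrArg (Nat.cast : ℕ → ℤ) hfin

lemma dist_lb (n : ℕ) (hn : 2 ≤ n) (a : (Fin (2*n) → ZMod 2) → ZMod 2) (ha : IsAffine a) :
    2 ^ (2*n) ≤ 2 * hdist (maj (2*n) n) a + (2*n).choose n := by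
  obtain ⟨w, b, hab⟩ := ha
  have hsum := sum_chi (fun x => maj (2*n) n x + a x)
  have hrw : ∑ x : Fin (2*n) → ZMod 2, chi (maj (2*n) n x + a x)
      = chi b * ∑ x : Fin (2*n) → ZMod 2, chi (maj (2*n) n x) * chi (∑ i, w i * x i) := by
    rw [Finset.mul_sum]
    apply Finset.sum_congr rfl
    intro x _
    rw [hab x, ← add_assoc, chi_add, chi_add]
    ring
  have heq : (2:ℤ) ^ (2*n) - 2 * (wtF (fun x => maj (2*n) n x + a x) : ℤ)
      = chi b * ∑ x : Fin (2*n) → ZMod 2, chi (maj (2*n) n x) * chi (∑ i, w i * x i) :=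
    hsum.symm.trans hrw
  have hb := walsh_bound n hn w
  have h1 : (2:ℤ) ^ (2*n) - 2 * (wtF (fun x => maj (2*n) n x + a x) : ℤ)
      ≤ ((2*n).choose n : ℤ) := by
    rw [heq]
    calc chi b * ∑ x : Fin (2*n) → ZMod 2, chi (maj (2*n) n x) * chi (∑ i, w i * x i)
        ≤ |chi b * ∑ x : Fin (2*n) → ZMod 2, chi (maj (2*n) n x) * chi (∑ i, w i * x i)| :=
          le_abs_self _
      _ = |∑ x : Fin (2*n) → ZMod 2, chi (maj (2*n) n x) * chi (∑ i, w i * x i)| := by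
          rw [abs_mul, chi_abs b, one_mul]
      _ ≤ ((2*n).choose n : ℤ) := hb
  have h2 : ((2:ℕ) ^ (2*n) : ℤ) ≤ 2 * (hdist (maj (2*n) n) a : ℤ) + ((2*n).choose n : ℤ) := by
    have hd : hdist (maj (2*n) n) a = wtF (fun x => maj (2*n) n x + a x) := rfl
    rw [hd]
    push_cast at h1 ⊢
    linarith
  exact_mod_cast h2

/-- `N(M_{2n}) = 2^(2n-1) - C(2n,n)/2`, stated as `2·N(M_{2n}) = 2^(2n) - C(2n,n)`. -/
theorem nonlinearity_majority_even (n : ℕ) (hn : 2 ≤ n) :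
    2 * nlin (maj (2 * n) n) = 2 ^ (2 * n) - Nat.choose (2 * n) n := by
  classical
  have haff : IsAffine (fun _ : Fin (2*n) → ZMod 2 => (1 : ZMod 2)) :=
    ⟨0, 1, by intro x; simp⟩
  have hmem : hdist (maj (2*n) n) (fun _ => 1)
      ∈ {d : ℕ | ∃ a, IsAffine a ∧ d = hdist (maj (2*n) n) a} :=
    ⟨_, haff, rfl⟩
  have hd₁val : 2 * hdist (maj (2*n) n) (fun _ => 1) + (2*n).choose n = 2 ^ (2*n) := by
    have hcongr : hdist (maj (2*n) n) (fun _ => 1)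
        = ((Finset.univ : Finset (Fin (2*n) → ZMod 2)).filter (fun x => ¬ n ≤ wtV x)).card := by
      unfold hdist wtF
      congr 1
      ext x
      rw [Finset.mem_filter, Finset.mem_filter]; simp only [Finset.mem_univ, true_and, maj]
      by_cases h : n ≤ wtV x
      · rw [if_pos h]
        constructor
        · intro hh; exact absurd hh (by decide)
        · intro hh; exact absurd h hh
      · rw [if_neg h]
        constructor
        · intro _; exact h
        · intro _; decide
    rw [hcongr]
    exact count_lt n
  have hlb : ∀ d ∈ {d : ℕ | ∃ a, IsAffine a ∧ d = hdist (maj (2*n) n) a},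
      hdist (maj (2*n) n) (fun _ => 1) ≤ d := by
    rintro d ⟨a, ha, rfl⟩
    have hh := dist_lb n hn a ha
    clear * - hh hd₁val
    omega
  have hinf : nlin (maj (2*n) n) = hdist (maj (2*n) n) (fun _ => 1) := by
    unfold nlin
    exact le_antisymm (Nat.sInf_le hmem) (le_csInf ⟨_, hmem⟩ hlb)
  rw [hinf]
  clear * - hd₁val
  omega
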